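/- Score-function policy gradient identity: under the policy parameterization hypotheses (each coordinate map θ ↦ π θ h s' a is Fréchet-differentiable at θ₀ with derivative D h s' a, and π θ₀ h s' a > 0 for all h, s', a), the map θ ↦ J(θ) is Fréchet-differentiable at θ₀ with derivative equal to ∑_τ f(τ; π θ₀) · F(τ) · ∑_{h=0}^{H−1} (π θ₀ h (s h) (a h))⁻¹ • D h (s h) (a h), where the sum ranges over all trajectories τ = (s, a). -/

import Mathlib

open Finset

/-- A trajectory: states at times `0,…,H` and actions at times `0,…,H−1`. -/
abbrev Traj (S A : Type) (H : ℕ) : Type := (Fin (H + 1) → S) × (Fin H → A)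

variable {S A : Type} {H : ℕ}

/-- The set of time-augmented states visited by `τ` up to step `j`. -/
def visitedUpTo [DecidableEq S] (τ : Traj S A H) (j : Fin (H + 1)) :
    Finset (Fin (H + 1) × S) :=
  (Finset.univ.filter fun l => l ≤ j).image fun l => (l, τ.1 l)

/-- The set of time-augmented states visited by the whole trajectory `τ`. -/
def visitedAll [DecidableEq S] (τ : Traj S A H) : Finset (Fin (H + 1) × S) :=
  Finset.univ.image fun l => (l, τ.1 l)

/-- Probability of trajectory `τ` under a Markovian policy table `π`. -/
def trajProb (ρ : S → ℝ) (P : Fin H → S → A → S → ℝ) (π : Fin H → S → A → ℝ)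
    (τ : Traj S A H) : ℝ :=
  ρ (τ.1 0) *
    ∏ h : Fin H, π h (τ.1 h.castSucc) (τ.2 h) * P h (τ.1 h.castSucc) (τ.2 h) (τ.1 h.succ)

/-- The objective `J(π) = ∑_τ f(τ;π) · F(τ)`. -/
def Jobj [Fintype S] [Fintype A] [DecidableEq S] (ρ : S → ℝ) (P : Fin H → S → A → S → ℝ)
    (F : Finset (Fin (H + 1) × S) → ℝ) (π : Fin H → S → A → ℝ) : ℝ :=
  ∑ τ : Traj S A H, trajProb ρ P π τ * F (visitedAll τ)

/-- `π` is a (stochastic) Markovian policy. -/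
def IsMarkovPolicy [Fintype A] (π : Fin H → S → A → ℝ) : Prop :=
  (∀ h s a, 0 ≤ π h s a) ∧ ∀ h s, ∑ a : A, π h s a = 1

/-- `π` is a deterministic Markovian policy. -/
def IsDetMarkovPolicy [Fintype A] (π : Fin H → S → A → ℝ) : Prop :=
  IsMarkovPolicy π ∧ ∀ h s, ∃ a, π h s a = 1


/-- Score-function policy gradient identity: the objective
`θ ↦ J(θ)` is Fréchet-differentiable at `θ₀` with derivative
`∑_τ f(τ; π θ₀) · F(τ) · ∑_h (π θ₀ h (s h) (a h))⁻¹ • D h (s h) (a h)`. -/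
theorem score_function_policy_gradient
    (S A : Type) [Fintype S] [Fintype A] [DecidableEq S] [Nonempty S] [Nonempty A]
    (H : ℕ) (hH : 1 ≤ H)
    (ρ : S → ℝ) (hρ0 : ∀ s, 0 ≤ ρ s) (hρ1 : ∑ s : S, ρ s = 1)
    (P : Fin H → S → A → S → ℝ)
    (hP0 : ∀ h s a s', 0 ≤ P h s a s') (hP1 : ∀ h s a, ∑ s' : S, P h s a s' = 1)
    (F : Finset (Fin (H + 1) × S) → ℝ)
    (d : ℕ) (π : (Fin d → ℝ) → Fin H → S → A → ℝ) (θ₀ : Fin d → ℝ)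
    (D : Fin H → S → A → ((Fin d → ℝ) →L[ℝ] ℝ))
    (hdiff : ∀ h s a, HasFDerivAt (fun θ => π θ h s a) (D h s a) θ₀)
    (hpos : ∀ h s a, 0 < π θ₀ h s a) :
    HasFDerivAt (fun θ => Jobj ρ P F (π θ))
      (∑ τ : Traj S A H,
        (trajProb ρ P (π θ₀) τ * F (visitedAll τ)) •
          ∑ h : Fin H,
            (π θ₀ h (τ.1 h.castSucc) (τ.2 h))⁻¹ • D h (τ.1 h.castSucc) (τ.2 h))
      θ₀ := by
  have key : ∀ τ : Traj S A H,
      HasFDerivAt (fun θ => trajProb ρ P (π θ) τ * F (visitedAll τ))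
        ((trajProb ρ P (π θ₀) τ * F (visitedAll τ)) •
          ∑ h : Fin H,
            (π θ₀ h (τ.1 h.castSucc) (τ.2 h))⁻¹ • D h (τ.1 h.castSucc) (τ.2 h)) θ₀ := by
    intro τ
    have hprod : HasFDerivAt
        (fun θ => ∏ h : Fin H,
          π θ h (τ.1 h.castSucc) (τ.2 h) * P h (τ.1 h.castSucc) (τ.2 h) (τ.1 h.succ))
        (∑ h : Fin H,
          (∏ j ∈ Finset.univ.erase h,
            π θ₀ j (τ.1 j.castSucc) (τ.2 j) * P j (τ.1 j.castSucc) (τ.2 j) (τ.1 j.succ)) •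
          (P h (τ.1 h.castSucc) (τ.2 h) (τ.1 h.succ) • D h (τ.1 h.castSucc) (τ.2 h))) θ₀ := by
      apply HasFDerivAt.finset_prod
      intro h _
      exact (hdiff h (τ.1 h.castSucc) (τ.2 h)).mul_const _
    have h2 := (hprod.const_mul (ρ (τ.1 0))).mul_const (F (visitedAll τ))
    refine h2.congr_fderiv ?_
    symm
    simp only [Finset.smul_sum, smul_smul]
    refine Finset.sum_congr rfl fun h _ => ?_
    congr 1
    have hne : π θ₀ h (τ.1 h.castSucc) (τ.2 h) ≠ 0 :=
      (hpos h (τ.1 h.castSucc) (τ.2 h)).ne'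
    have hsplit := Finset.mul_prod_erase Finset.univ
      (fun j => π θ₀ j (τ.1 j.castSucc) (τ.2 j) * P j (τ.1 j.castSucc) (τ.2 j) (τ.1 j.succ))
      (Finset.mem_univ h)
    unfold trajProb
    rw [← hsplit]
    field_simp
  exact HasFDerivAt.fun_sum fun τ _ => key τ
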